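/- Let {a_{i,j}}_{1≤i,j≤n} be nonnegative reals and Π a uniformly random permutation of {1,…,n}. Let Z = ∑_{i=1}^n a_{i,Π(i)}. Then Var(Z) ≤ (2/n) ∑_{i,j=1}^n a_{i,j}^2. -/

import Mathlib

/-- Expectation with respect to the uniform distribution on permutations of `{1,…,n}`. -/
noncomputable def Ex (n : ℕ) (f : Equiv.Perm (Fin n) → ℝ) : ℝ :=
  (∑ π : Equiv.Perm (Fin n), f π) / (Nat.factorial n)

open Finset

private lemma exists_perm_pair {α : Type*} [DecidableEq α] {j l j' l' : α}
    (h : j ≠ l) (h' : j' ≠ l') : ∃ σ : Equiv.Perm α, σ j = j' ∧ σ l = l' := by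
  refine ⟨(Equiv.swap (Equiv.swap j j' l) l') * (Equiv.swap j j'), ?_, ?_⟩
  · simp only [Equiv.Perm.mul_apply, Equiv.swap_apply_left]
    apply Equiv.swap_apply_of_ne_of_ne
    · intro hE
      exact h ((Equiv.swap j j').injective (by rw [← hE, Equiv.swap_apply_left]))
    · exact h'
  · simp only [Equiv.Perm.mul_apply, Equiv.swap_apply_left]

private lemma card_fiber_one {n : ℕ} (i : Fin n) (j j' : Fin n) :
    (univ.filter fun π : Equiv.Perm (Fin n) => π i = j).card
      = (univ.filter fun π : Equiv.Perm (Fin n) => π i = j').card := by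
  refine Finset.card_bij' (fun π _ => Equiv.swap j j' * π)
    (fun π _ => Equiv.swap j j' * π) ?_ ?_ ?_ ?_
  · intro π hπ
    simp only [mem_filter, mem_univ, true_and] at hπ ⊢
    rw [Equiv.Perm.mul_apply, hπ, Equiv.swap_apply_left]
  · intro π hπ
    simp only [mem_filter, mem_univ, true_and] at hπ ⊢
    rw [Equiv.Perm.mul_apply, hπ, Equiv.swap_apply_right]
  · intro π _; simp [← mul_assoc]
  · intro π _; simp [← mul_assoc]

private lemma card_fiber_pair {n : ℕ} (i k : Fin n) {j l j' l' : Fin n}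
    (hjl : j ≠ l) (hjl' : j' ≠ l') :
    (univ.filter fun π : Equiv.Perm (Fin n) => π i = j ∧ π k = l).card
      = (univ.filter fun π : Equiv.Perm (Fin n) => π i = j' ∧ π k = l').card := by
  obtain ⟨σ, hσ1, hσ2⟩ := exists_perm_pair hjl hjl'
  refine Finset.card_bij' (fun π _ => σ * π) (fun π _ => σ⁻¹ * π) ?_ ?_ ?_ ?_
  · intro π hπ
    simp only [mem_filter, mem_univ, true_and] at hπ ⊢
    rw [Equiv.Perm.mul_apply, Equiv.Perm.mul_apply, hπ.1, hπ.2, hσ1, hσ2]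
    exact ⟨rfl, rfl⟩
  · intro π hπ
    simp only [mem_filter, mem_univ, true_and] at hπ ⊢
    rw [Equiv.Perm.mul_apply, Equiv.Perm.mul_apply, hπ.1, hπ.2, ← hσ1, ← hσ2]
    simp
  · intro π _; simp [← mul_assoc]
  · intro π _; simp [← mul_assoc]

private lemma sum_perm_single {n : ℕ} (i : Fin n) (f : Fin n → ℝ) :
    (n : ℝ) * ∑ π : Equiv.Perm (Fin n), f (π i)
      = (Nat.factorial n : ℝ) * ∑ j, f j := by
  classical
  have hmaps : ∀ π ∈ (univ : Finset (Equiv.Perm (Fin n))), π i ∈ (univ : Finset (Fin n)) :=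
    fun _ _ => mem_univ _
  have hcard : ∀ j : Fin n, n * (univ.filter fun π : Equiv.Perm (Fin n) => π i = j).card
      = Nat.factorial n := by
    intro j
    have h1 : (univ : Finset (Equiv.Perm (Fin n))).card
        = ∑ j' : Fin n, (univ.filter fun π : Equiv.Perm (Fin n) => π i = j').card :=
      Finset.card_eq_sum_card_fiberwise hmaps
    have h2 : ∑ j' : Fin n, (univ.filter fun π : Equiv.Perm (Fin n) => π i = j').card
        = ∑ _j' : Fin n, (univ.filter fun π : Equiv.Perm (Fin n) => π i = j).card :=
      Finset.sum_congr rfl fun j' _ => card_fiber_one i j' j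
    rw [← h1, Finset.sum_const, Finset.card_univ, Finset.card_univ, Fintype.card_fin,
      smul_eq_mul] at h2
    rw [← h2, Fintype.card_perm, Fintype.card_fin]
  rw [← Finset.sum_fiberwise_of_maps_to hmaps (fun π => f (π i)), Finset.mul_sum,
    Finset.mul_sum]
  refine Finset.sum_congr rfl fun j _ => ?_
  have : ∑ π ∈ univ.filter fun π : Equiv.Perm (Fin n) => π i = j, f (π i)
      = (univ.filter fun π : Equiv.Perm (Fin n) => π i = j).card * f j := by
    rw [Finset.sum_congr rfl (fun π hπ => by rw [(Finset.mem_filter.mp hπ).2]),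
      Finset.sum_const, nsmul_eq_mul]
  have hc : ((n : ℝ)) * ((univ.filter fun π : Equiv.Perm (Fin n) => π i = j).card : ℝ)
      = (Nat.factorial n : ℝ) := by exact_mod_cast congrArg (Nat.cast (R := ℝ)) (hcard j)
  rw [this]
  linear_combination (f j) * hc

private lemma sum_perm_pair {n : ℕ} (i k : Fin n) (hik : i ≠ k) (g : Fin n → Fin n → ℝ) :
    ((n * (n - 1) : ℕ) : ℝ) * ∑ π : Equiv.Perm (Fin n), g (π i) (π k)
      = (Nat.factorial n : ℝ) * ∑ p ∈ (univ : Finset (Fin n)).offDiag, g p.1 p.2 := by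
  classical
  have hmaps : ∀ π ∈ (univ : Finset (Equiv.Perm (Fin n))),
      ((π i, π k) : Fin n × Fin n) ∈ (univ : Finset (Fin n)).offDiag := by
    intro π _
    simp only [Finset.mem_offDiag, mem_univ, true_and]
    exact fun h => hik (π.injective h)
  have hfib : ∀ p : Fin n × Fin n,
      (univ.filter fun π : Equiv.Perm (Fin n) => (π i, π k) = p)
        = univ.filter fun π : Equiv.Perm (Fin n) => π i = p.1 ∧ π k = p.2 := by
    intro p
    apply Finset.filter_congr
    intro π _
    simp [Prod.ext_iff]
  have hcard : ∀ p ∈ (univ : Finset (Fin n)).offDiag,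
      (n * (n - 1)) * (univ.filter fun π : Equiv.Perm (Fin n) => (π i, π k) = p).card
        = Nat.factorial n := by
    intro p hp
    rw [Finset.mem_offDiag] at hp
    have h1 : (univ : Finset (Equiv.Perm (Fin n))).card
        = ∑ q ∈ (univ : Finset (Fin n)).offDiag,
          (univ.filter fun π : Equiv.Perm (Fin n) => (π i, π k) = q).card :=
      Finset.card_eq_sum_card_fiberwise hmaps
    have h2 : ∑ q ∈ (univ : Finset (Fin n)).offDiag,
          (univ.filter fun π : Equiv.Perm (Fin n) => (π i, π k) = q).card
        = ∑ _q ∈ (univ : Finset (Fin n)).offDiag,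
          (univ.filter fun π : Equiv.Perm (Fin n) => (π i, π k) = p).card := by
      refine Finset.sum_congr rfl fun q hq => ?_
      rw [Finset.mem_offDiag] at hq
      rw [hfib q, hfib p]
      exact card_fiber_pair i k hq.2.2 hp.2.2
    rw [← h1, Finset.sum_const, smul_eq_mul, Finset.offDiag_card] at h2
    simp only [Finset.card_univ, Fintype.card_fin] at h2
    rw [← Nat.mul_sub_one] at h2
    rw [← h2, Fintype.card_perm, Fintype.card_fin]
  rw [← Finset.sum_fiberwise_of_maps_to hmaps (fun π => g (π i) (π k)), Finset.mul_sum,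
    Finset.mul_sum]
  refine Finset.sum_congr rfl fun p hp => ?_
  have hin : ∑ π ∈ univ.filter fun π : Equiv.Perm (Fin n) => (π i, π k) = p, g (π i) (π k)
      = ((univ.filter fun π : Equiv.Perm (Fin n) => (π i, π k) = p).card : ℝ) * g p.1 p.2 := by
    rw [Finset.sum_congr rfl (fun π hπ => ?_), Finset.sum_const, nsmul_eq_mul]
    have := (Finset.mem_filter.mp hπ).2
    rw [Prod.mk.injEq] at this
    rw [this.1, this.2]
  have hc : (((n * (n - 1) : ℕ)) : ℝ)
      * (((univ.filter fun π : Equiv.Perm (Fin n) => (π i, π k) = p).card : ℕ) : ℝ)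
      = (Nat.factorial n : ℝ) := by exact_mod_cast congrArg (Nat.cast (R := ℝ)) (hcard p hp)
  rw [hin]
  linear_combination (g p.1 p.2) * hc

private lemma hoff_aux {n : ℕ} (f : Fin n → Fin n → ℝ) :
    ∑ p ∈ (univ : Finset (Fin n)).offDiag, f p.1 p.2
      = (∑ i, ∑ k, f i k) - ∑ i, f i i := by
  classical
  have h := Finset.sum_union (f := fun p : Fin n × Fin n => f p.1 p.2)
    (Finset.disjoint_diag_offDiag (univ : Finset (Fin n)))
  rw [Finset.diag_union_offDiag, Finset.sum_product', Finset.sum_diag] at h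
  simp only at h
  linarith [h]

/-- For nonnegative reals `a i j` and `Z = ∑ i, a i (Π i)` with `Π` a uniform random
permutation, `Var(Z) ≤ (2/n) ∑_{i,j} a_{i,j}²`. -/
theorem stmt_2 (n : ℕ) (hn : 0 < n) (a : Fin n → Fin n → ℝ)
    (ha : ∀ i j, 0 ≤ a i j) :
    Ex n (fun π => ((∑ i, a i (π i)) - Ex n (fun π' => ∑ i, a i (π' i)))^2)
      ≤ (2 / n) * ∑ i, ∑ j, (a i j)^2 := by
  classical
  obtain rfl | hn2 : n = 1 ∨ 2 ≤ n := by omega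
  · -- case n = 1 : the variable is constant
    have hEx : ∀ f : Equiv.Perm (Fin 1) → ℝ, Ex 1 f = f 1 := by
      intro f
      have huniv : (univ : Finset (Equiv.Perm (Fin 1))) = {1} :=
        Finset.eq_singleton_iff_unique_mem.mpr ⟨mem_univ _, fun x _ => Subsingleton.elim x 1⟩
      rw [Ex, huniv, Finset.sum_singleton, Nat.factorial_one, Nat.cast_one, div_one]
    rw [hEx, hEx]
    simp only [sub_self]
    rw [show ((0:ℝ))^2 = 0 by norm_num]
    positivity
  · -- main case n ≥ 2
    have hn1 : 1 ≤ n := hn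
    have hN0 : (0:ℝ) < (n:ℝ) := by exact_mod_cast hn
    have hN2 : (2:ℝ) ≤ (n:ℝ) := by exact_mod_cast hn2
    have hF : (0:ℝ) < (Nat.factorial n : ℝ) := by exact_mod_cast n.factorial_pos
    -- expectation of Z
    have hmF : Ex n (fun π' => ∑ i, a i (π' i)) * (Nat.factorial n : ℝ)
        = ∑ π : Equiv.Perm (Fin n), ∑ i, a i (π i) := by
      rw [Ex, div_mul_cancel₀ _ hF.ne']
    have hmS : (n:ℝ) * (Ex n (fun π' => ∑ i, a i (π' i)) * (Nat.factorial n : ℝ))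
        = (Nat.factorial n : ℝ) * ∑ i, ∑ j, a i j := by
      rw [hmF, Finset.sum_comm, Finset.mul_sum, Finset.mul_sum]
      exact Finset.sum_congr rfl fun i _ => sum_perm_single i (fun j => a i j)
    -- diagonal part
    have hD : (n:ℝ) * (∑ π : Equiv.Perm (Fin n), ∑ i, (a i (π i))^2)
        = (Nat.factorial n : ℝ) * ∑ i, ∑ j, (a i j)^2 := by
      rw [Finset.sum_comm, Finset.mul_sum, Finset.mul_sum]
      exact Finset.sum_congr rfl fun i _ => sum_perm_single i (fun j => (a i j)^2)
    -- off-diagonal part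
    have hcast : ((n * (n - 1) : ℕ) : ℝ) = (n:ℝ) * ((n:ℝ) - 1) := by
      rw [Nat.cast_mul, Nat.cast_sub hn1, Nat.cast_one]
    have hO : (n:ℝ) * ((n:ℝ) - 1) *
        (∑ π : Equiv.Perm (Fin n), ∑ p ∈ (univ : Finset (Fin n)).offDiag,
          a p.1 (π p.1) * a p.2 (π p.2))
        = (Nat.factorial n : ℝ) * ∑ p ∈ (univ : Finset (Fin n)).offDiag,
            ∑ q ∈ (univ : Finset (Fin n)).offDiag, a p.1 q.1 * a p.2 q.2 := by
      rw [← hcast, Finset.sum_comm, Finset.mul_sum, Finset.mul_sum]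
      refine Finset.sum_congr rfl fun p hp => ?_
      exact sum_perm_pair p.1 p.2 (Finset.mem_offDiag.mp hp).2.2 (fun j l => a p.1 j * a p.2 l)
    -- expansion of Z²
    have hZ2 : ∀ π : Equiv.Perm (Fin n), (∑ i, a i (π i))^2
        = (∑ i, (a i (π i))^2) + ∑ p ∈ (univ : Finset (Fin n)).offDiag,
            a p.1 (π p.1) * a p.2 (π p.2) := by
      intro π
      rw [hoff_aux (fun i k => a i (π i) * a k (π k))]
      have hexp : (∑ i, a i (π i))^2 = ∑ i, ∑ k, a i (π i) * a k (π k) := by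
        rw [sq, Finset.sum_mul_sum]
      have hdiag : ∑ i, a i (π i) * a i (π i) = ∑ i, (a i (π i))^2 :=
        Finset.sum_congr rfl fun i _ => (pow_two _).symm
      rw [hexp, hdiag]
      ring
    have hsum2 : (∑ π : Equiv.Perm (Fin n), (∑ i, a i (π i))^2)
        = (∑ π : Equiv.Perm (Fin n), ∑ i, (a i (π i))^2)
          + ∑ π : Equiv.Perm (Fin n), ∑ p ∈ (univ : Finset (Fin n)).offDiag,
              a p.1 (π p.1) * a p.2 (π p.2) := by
      rw [← Finset.sum_add_distrib]
      exact Finset.sum_congr rfl fun π _ => hZ2 π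
    -- variance formula
    have hVF : Ex n (fun π => ((∑ i, a i (π i)) - Ex n (fun π' => ∑ i, a i (π' i)))^2)
          * (Nat.factorial n : ℝ)
        = (∑ π : Equiv.Perm (Fin n), (∑ i, a i (π i))^2)
          - (Nat.factorial n : ℝ) * (Ex n (fun π' => ∑ i, a i (π' i)))^2 := by
      rw [Ex, div_mul_cancel₀ _ hF.ne']
      have expand : ∑ π : Equiv.Perm (Fin n),
            ((∑ i, a i (π i)) - Ex n (fun π' => ∑ i, a i (π' i)))^2
          = (∑ π : Equiv.Perm (Fin n), (∑ i, a i (π i))^2)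
            - 2 * Ex n (fun π' => ∑ i, a i (π' i))
                * (∑ π : Equiv.Perm (Fin n), ∑ i, a i (π i))
            + ((univ : Finset (Equiv.Perm (Fin n))).card : ℝ)
              * (Ex n (fun π' => ∑ i, a i (π' i)))^2 := by
        rw [Finset.mul_sum, ← Finset.sum_sub_distrib]
        rw [show (((univ : Finset (Equiv.Perm (Fin n))).card : ℝ)
              * (Ex n (fun π' => ∑ i, a i (π' i)))^2)
            = ∑ _π : Equiv.Perm (Fin n), (Ex n (fun π' => ∑ i, a i (π' i)))^2 by
          rw [Finset.sum_const, nsmul_eq_mul]]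
        rw [← Finset.sum_add_distrib]
        exact Finset.sum_congr rfl fun π _ => by ring
      rw [expand, Finset.card_univ, Fintype.card_perm, Fintype.card_fin, ← hmF]
      ring
    -- the U computation
    have hU : (∑ p ∈ (univ : Finset (Fin n)).offDiag,
          ∑ q ∈ (univ : Finset (Fin n)).offDiag, a p.1 q.1 * a p.2 q.2)
        = (∑ i, ∑ j, a i j)^2 - (∑ i, (∑ j, a i j)^2) - (∑ j, (∑ i, a i j)^2)
          + ∑ i, ∑ j, (a i j)^2 := by
      have hinner : ∀ p : Fin n × Fin n,
          (∑ q ∈ (univ : Finset (Fin n)).offDiag, a p.1 q.1 * a p.2 q.2)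
            = (∑ j, a p.1 j) * (∑ l, a p.2 l) - ∑ j, a p.1 j * a p.2 j := by
        intro p
        rw [hoff_aux (fun j l => a p.1 j * a p.2 l), Finset.sum_mul_sum]
      rw [Finset.sum_congr rfl fun p _ => hinner p,
        hoff_aux (fun i k => (∑ j, a i j) * (∑ l, a k l) - ∑ j, a i j * a k j)]
      have e1a : (∑ i, ∑ k, (∑ j, a i j) * (∑ l, a k l)) = (∑ i, ∑ j, a i j)^2 := by
        rw [sq, Finset.sum_mul_sum]
      have e1b : (∑ i, ∑ k, ∑ j, a i j * a k j) = ∑ j, (∑ i, a i j)^2 := by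
        calc ∑ i, ∑ k, ∑ j, a i j * a k j
            = ∑ i, ∑ j, ∑ k, a i j * a k j :=
              Finset.sum_congr rfl fun i _ => Finset.sum_comm
          _ = ∑ j, ∑ i, ∑ k, a i j * a k j := Finset.sum_comm
          _ = ∑ j, (∑ i, a i j)^2 := by
              refine Finset.sum_congr rfl fun j _ => ?_
              rw [sq, Finset.sum_mul_sum]
      have e1 : (∑ i, ∑ k, ((∑ j, a i j) * (∑ l, a k l) - ∑ j, a i j * a k j))
          = (∑ i, ∑ j, a i j)^2 - ∑ j, (∑ i, a i j)^2 := by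
        rw [Finset.sum_congr rfl fun i (_ : i ∈ univ) => Finset.sum_sub_distrib _ _,
          Finset.sum_sub_distrib, e1a, e1b]
      have e2 : (∑ i : Fin n, ((∑ j, a i j) * (∑ l, a i l) - ∑ j, a i j * a i j))
          = (∑ i, (∑ j, a i j)^2) - ∑ i, ∑ j, (a i j)^2 := by
        rw [Finset.sum_sub_distrib]
        congr 1
        · exact Finset.sum_congr rfl fun i _ => by rw [sq]
        · exact Finset.sum_congr rfl fun i _ =>
            Finset.sum_congr rfl fun j _ => (pow_two _).symm
      rw [e1, e2]
      ring
    -- the key identity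
    have keyF : ((n:ℝ)^2 * ((n:ℝ) - 1)
          * Ex n (fun π => ((∑ i, a i (π i)) - Ex n (fun π' => ∑ i, a i (π' i)))^2))
          * (Nat.factorial n : ℝ)
        = ((∑ i, ∑ j, a i j)^2 + (n:ℝ)^2 * (∑ i, ∑ j, (a i j)^2)
            - (n:ℝ) * (∑ i, (∑ j, a i j)^2) - (n:ℝ) * (∑ j, (∑ i, a i j)^2))
          * (Nat.factorial n : ℝ) := by
      linear_combination ((n:ℝ)^2 * ((n:ℝ) - 1)) * hVF
        + ((n:ℝ)^2 * ((n:ℝ) - 1)) * hsum2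
        + ((n:ℝ) * ((n:ℝ) - 1)) * hD
        + (n:ℝ) * hO
        + ((n:ℝ) * (Nat.factorial n : ℝ)) * hU
        - (((n:ℝ) - 1) * ((n:ℝ) * Ex n (fun π' => ∑ i, a i (π' i))
            + (∑ i, ∑ j, a i j))) * hmS
    have key : (n:ℝ)^2 * ((n:ℝ) - 1)
          * Ex n (fun π => ((∑ i, a i (π i)) - Ex n (fun π' => ∑ i, a i (π' i)))^2)
        = (∑ i, ∑ j, a i j)^2 + (n:ℝ)^2 * (∑ i, ∑ j, (a i j)^2)
            - (n:ℝ) * (∑ i, (∑ j, a i j)^2) - (n:ℝ) * (∑ j, (∑ i, a i j)^2) :=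
      mul_right_cancel₀ hF.ne' keyF
    -- Cauchy–Schwarz and conclusion
    have hCS : (∑ i, ∑ j, a i j)^2 ≤ (n:ℝ) * ∑ i, (∑ j, a i j)^2 := by
      have h := sq_sum_le_card_mul_sum_sq (s := (univ : Finset (Fin n)))
        (f := fun i => ∑ j, a i j)
      simpa using h
    have hSC0 : (0:ℝ) ≤ ∑ j, (∑ i, a i j)^2 := Finset.sum_nonneg fun j _ => sq_nonneg _
    have hQ0 : (0:ℝ) ≤ ∑ i, ∑ j, (a i j)^2 :=
      Finset.sum_nonneg fun i _ => Finset.sum_nonneg fun j _ => sq_nonneg _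
    rw [div_mul_eq_mul_div, le_div_iff₀ hN0]
    nlinarith [key, hCS, mul_nonneg hN0.le hSC0,
      mul_nonneg (mul_nonneg hN0.le hQ0) (by linarith : (0:ℝ) ≤ (n:ℝ) - 2),
      mul_pos hN0 (show (0:ℝ) < (n:ℝ) - 1 by linarith)]
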